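/- For all real numbers t > 0 and r > 0, ∫_{−∞}^{∞} e^{−π t y²} / (y − i r) dy = π i r · ∫_{0}^{∞} e^{−π r² u} / √(u + t) du, where both integrals converge absolutely. -/

import Mathlib

open Complex MeasureTheory Set

private lemma gve_exp_int (b : ℝ) (hb : 0 < b) :
    ∫ u in Ioi (0:ℝ), Real.exp (-(b*u)) = b⁻¹ := by
  have h := integral_comp_mul_left_Ioi (fun x => Real.exp (-x)) 0 hb
  simp only [mul_zero, integral_exp_neg_Ioi, neg_zero, Real.exp_zero, smul_eq_mul, mul_one] at h
  exact h

private lemma gve_gauss (t r : ℝ) (ht : 0 < t) (hr : 0 < r) :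
    Integrable (fun y : ℝ => Real.exp (-(Real.pi * t * y ^ 2))) := by
  simpa only [neg_mul] using integrable_exp_neg_mul_sq (mul_pos Real.pi_pos ht)

private lemma gve_expneg (r : ℝ) (hr : 0 < r) :
    IntegrableOn (fun u : ℝ => Real.exp (-(Real.pi * r ^ 2 * u))) (Ioi 0) := by
  simpa only [neg_mul] using
    exp_neg_integrableOn_Ioi 0 (mul_pos Real.pi_pos (pow_pos hr 2))

/-- Fubini step. -/
private lemma gve_key (t r : ℝ) (ht : 0 < t) (hr : 0 < r) :
    ∫ y : ℝ, Real.exp (-(Real.pi * t * y ^ 2)) / (y ^ 2 + r ^ 2)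
      = Real.pi * ∫ u in Ioi (0:ℝ), Real.exp (-(Real.pi * r ^ 2 * u)) / Real.sqrt (u + t) := by
  set F : ℝ → ℝ → ℝ := fun y u =>
    Real.exp (-(Real.pi * t * y ^ 2)) * Real.exp (-(Real.pi * (y ^ 2 + r ^ 2) * u)) with hF_def
  -- integrability of uncurry F on the product
  have hprod : Integrable (fun z : ℝ × ℝ =>
      Real.exp (-(Real.pi * t * z.1 ^ 2)) * Real.exp (-(Real.pi * r ^ 2 * z.2)))
      (volume.prod (volume.restrict (Ioi 0))) :=
    (gve_gauss t r ht hr).mul_prod (gve_expneg r hr)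
  have hmemae : ∀ᵐ z : ℝ × ℝ ∂(volume.prod (volume.restrict (Ioi 0))), z.2 ∈ Ioi (0:ℝ) := by
    rw [ae_iff]
    have : {z : ℝ × ℝ | ¬ z.2 ∈ Ioi (0:ℝ)} = (univ : Set ℝ) ×ˢ (Ioi (0:ℝ))ᶜ := by
      ext z; simp [Set.mem_prod]
    rw [this, Measure.prod_prod, Measure.restrict_apply (measurableSet_Ioi.compl)]
    have he : (Ioi (0:ℝ))ᶜ ∩ Ioi 0 = ∅ := by
      ext x; simp
    rw [he]
    simp
  have hF : Integrable (Function.uncurry F) (volume.prod (volume.restrict (Ioi 0))) := by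
    refine hprod.mono' ?_ ?_
    · apply Continuous.aestronglyMeasurable
      fun_prop
    · filter_upwards [hmemae] with z hz
      have hz' : (0:ℝ) ≤ z.2 := le_of_lt hz
      have h1 : Real.exp (-(Real.pi * (z.1 ^ 2 + r ^ 2) * z.2))
          ≤ Real.exp (-(Real.pi * r ^ 2 * z.2)) := by
        apply Real.exp_le_exp.2
        nlinarith [mul_nonneg (mul_nonneg Real.pi_pos.le (sq_nonneg z.1)) hz']
      show ‖F z.1 z.2‖ ≤ _
      simp only [hF_def]
      rw [Real.norm_eq_abs,
        _root_.abs_of_nonneg (mul_nonneg (Real.exp_nonneg _) (Real.exp_nonneg _))]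
      exact mul_le_mul_of_nonneg_left h1 (Real.exp_nonneg _)
  have hswap := integral_integral_swap hF
  -- compute left side of hswap
  have hL : (∫ y : ℝ, ∫ u in Ioi (0:ℝ), F y u)
      = Real.pi⁻¹ * ∫ y : ℝ, Real.exp (-(Real.pi * t * y ^ 2)) / (y ^ 2 + r ^ 2) := by
    rw [← integral_const_mul]
    congr 1; funext y
    have hb : 0 < Real.pi * (y ^ 2 + r ^ 2) :=
      mul_pos Real.pi_pos (by positivity)
    rw [hF_def]
    simp only
    rw [integral_const_mul, gve_exp_int _ hb, mul_inv]
    field_simp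
  -- compute right side of hswap
  have hR : (∫ u in Ioi (0:ℝ), ∫ y : ℝ, F y u)
      = ∫ u in Ioi (0:ℝ), Real.exp (-(Real.pi * r ^ 2 * u)) / Real.sqrt (u + t) := by
    apply setIntegral_congr_fun measurableSet_Ioi
    intro u hu
    show (∫ y : ℝ, F y u) = Real.exp (-(Real.pi * r ^ 2 * u)) / Real.sqrt (u + t)
    have htu : (0:ℝ) < t + u := by
      have := le_of_lt (show (0:ℝ) < u from hu); linarith
    have hpt : (0:ℝ) < Real.pi * (t + u) := mul_pos Real.pi_pos htu
    have step : (fun y : ℝ => F y u)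
        = fun y : ℝ => Real.exp (-(Real.pi * (t + u)) * y ^ 2) * Real.exp (-(Real.pi * r ^ 2 * u)) := by
      funext y
      rw [hF_def]
      simp only
      rw [← Real.exp_add, ← Real.exp_add]
      congr 1; ring
    rw [step, integral_mul_const, integral_gaussian]
    have h1 : Real.pi / (Real.pi * (t + u)) = (t + u)⁻¹ := by
      rw [div_mul_eq_div_div, div_self Real.pi_ne_zero, one_div]
    rw [h1, Real.sqrt_inv, add_comm t u, inv_mul_eq_div]
  rw [hL, hR] at hswap
  rw [← hswap, ← mul_assoc, mul_inv_cancel₀ Real.pi_ne_zero, one_mul]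

theorem gaussian_vs_eichler_integral (t r : ℝ) (ht : 0 < t) (hr : 0 < r) :
    Integrable (fun y : ℝ =>
      Complex.exp (-(Real.pi * t * y ^ 2 : ℝ)) / ((y : ℂ) - Complex.I * r)) ∧
    IntegrableOn (fun u : ℝ =>
      Complex.exp (-(Real.pi * r ^ 2 * u : ℝ)) / (Real.sqrt (u + t) : ℂ))
      (Set.Ioi 0) ∧
    ∫ y : ℝ, Complex.exp (-(Real.pi * t * y ^ 2 : ℝ)) / ((y : ℂ) - Complex.I * r) =
      (Real.pi : ℂ) * Complex.I * r *
        ∫ u in Set.Ioi (0 : ℝ),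
          Complex.exp (-(Real.pi * r ^ 2 * u : ℝ)) / (Real.sqrt (u + t) : ℂ) := by
  have hden : ∀ y : ℝ, ((y : ℂ) - Complex.I * r) ≠ 0 := by
    intro y h
    have := congrArg Complex.im h
    simp at this
    exact hr.ne' this
  have hnorm_den : ∀ y : ℝ, r ≤ ‖(y : ℂ) - Complex.I * r‖ := by
    intro y
    have h1 : |((y : ℂ) - Complex.I * r).im| ≤ ‖(y : ℂ) - Complex.I * r‖ := by
      exact Complex.abs_im_le_norm _
    have h2 : ((y : ℂ) - Complex.I * r).im = -r := by simp
    rw [h2, abs_neg, abs_of_pos hr] at h1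
    exact h1
  -- Part 1
  have h1 : Integrable (fun y : ℝ =>
      Complex.exp (-(Real.pi * t * y ^ 2 : ℝ)) / ((y : ℂ) - Complex.I * r)) := by
    refine ((gve_gauss t r ht hr).const_mul r⁻¹).mono' ?_ ?_
    · apply Continuous.aestronglyMeasurable
      exact (Complex.continuous_exp.comp (by fun_prop)).div (by fun_prop) hden
    · filter_upwards with y
      simp only [norm_div, ← Complex.ofReal_neg, ← Complex.ofReal_exp, Complex.norm_real,
        Real.norm_eq_abs, Real.abs_exp]
      rw [div_le_iff₀ (lt_of_lt_of_le hr (hnorm_den y))]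
      calc Real.exp (-(Real.pi * t * y ^ 2))
          = r⁻¹ * Real.exp (-(Real.pi * t * y ^ 2)) * r := by field_simp
        _ ≤ r⁻¹ * Real.exp (-(Real.pi * t * y ^ 2)) * ‖(y : ℂ) - Complex.I * r‖ := by
            apply mul_le_mul_of_nonneg_left (hnorm_den y) (by positivity)
  -- Part 2
  have h2 : IntegrableOn (fun u : ℝ =>
      Complex.exp (-(Real.pi * r ^ 2 * u : ℝ)) / (Real.sqrt (u + t) : ℂ)) (Set.Ioi 0) := by
    refine (((gve_expneg r hr).const_mul (Real.sqrt t)⁻¹)).mono' ?_ ?_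
    · apply ContinuousOn.aestronglyMeasurable ?_ measurableSet_Ioi
      apply ContinuousOn.div
      · exact (Complex.continuous_exp.comp (by fun_prop)).continuousOn
      · fun_prop
      · intro u hu
        have : (0:ℝ) < Real.sqrt (u + t) := Real.sqrt_pos.2 (by
          have : (0:ℝ) < u := hu; linarith)
        simp [Complex.ofReal_eq_zero]
        exact this.ne'
    · rw [ae_restrict_iff' measurableSet_Ioi]
      filter_upwards with u hu
      have hu0 : (0:ℝ) < u := hu
      have hst : Real.sqrt t ≤ Real.sqrt (u + t) := Real.sqrt_le_sqrt (by linarith)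
      have hst0 : (0:ℝ) < Real.sqrt t := Real.sqrt_pos.2 ht
      simp only [norm_div, ← Complex.ofReal_neg, ← Complex.ofReal_exp, Complex.norm_real,
        Real.norm_eq_abs, Real.abs_exp, _root_.abs_of_nonneg (Real.sqrt_nonneg (u + t))]
      rw [div_le_iff₀ (lt_of_lt_of_le hst0 hst)]
      calc Real.exp (-(Real.pi * r ^ 2 * u))
          = (Real.sqrt t)⁻¹ * Real.exp (-(Real.pi * r ^ 2 * u)) * Real.sqrt t := by field_simp
        _ ≤ (Real.sqrt t)⁻¹ * Real.exp (-(Real.pi * r ^ 2 * u)) * Real.sqrt (u + t) := by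
            apply mul_le_mul_of_nonneg_left hst (by positivity)
  refine ⟨h1, h2, ?_⟩
  -- the equality
  -- decompose 1/(y - ir) = (y + ir)/(y² + r²)
  set f₁ : ℝ → ℝ := fun y => Real.exp (-(Real.pi * t * y ^ 2)) * y / (y ^ 2 + r ^ 2) with hf₁
  set f₂ : ℝ → ℝ := fun y => Real.exp (-(Real.pi * t * y ^ 2)) / (y ^ 2 + r ^ 2) with hf₂
  have hdec : ∀ y : ℝ, Complex.exp (-(Real.pi * t * y ^ 2 : ℝ)) / ((y : ℂ) - Complex.I * r)
      = (f₁ y : ℂ) + Complex.I * r * (f₂ y : ℂ) := by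
    intro y
    have hd2 : ((y : ℂ) ^ 2 + (r : ℂ) ^ 2) ≠ 0 := by
      have : ((y : ℂ) ^ 2 + (r : ℂ) ^ 2) = ((y ^ 2 + r ^ 2 : ℝ) : ℂ) := by push_cast; ring
      rw [this, Ne, Complex.ofReal_eq_zero]
      positivity
    rw [hf₁, hf₂, ← Complex.ofReal_neg, ← Complex.ofReal_exp]
    push_cast
    rw [div_eq_iff (hden y)]
    field_simp
    ring_nf
    rw [Complex.I_sq]
    ring
  -- integrability of the pieces (real)
  have hif₁ : Integrable f₁ := by
    refine (((gve_gauss t r ht hr)).const_mul (2*r)⁻¹).mono' ?_ ?_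
    · apply Continuous.aestronglyMeasurable
      apply Continuous.div (by fun_prop) (by fun_prop)
      intro y; positivity
    · filter_upwards with y
      rw [hf₁, Real.norm_eq_abs]
      simp only
      rw [abs_div, _root_.abs_of_pos (show (0:ℝ) < y ^ 2 + r ^ 2 by positivity), abs_mul,
        Real.abs_exp, div_le_iff₀ (by positivity)]
      have key : |y| * (2 * r) ≤ y ^ 2 + r ^ 2 := by nlinarith [sq_nonneg (|y| - r), _root_.sq_abs y]
      calc Real.exp (-(Real.pi * t * y ^ 2)) * |y|
          ≤ Real.exp (-(Real.pi * t * y ^ 2)) * ((y ^ 2 + r ^ 2) / (2 * r)) := by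
            apply mul_le_mul_of_nonneg_left ?_ (Real.exp_nonneg _)
            rw [le_div_iff₀ (by positivity)]; linarith
        _ = (2*r)⁻¹ * Real.exp (-(Real.pi * t * y ^ 2)) * (y ^ 2 + r ^ 2) := by ring
  have hif₂ : Integrable f₂ := by
    refine (((gve_gauss t r ht hr)).const_mul (r^2)⁻¹).mono' ?_ ?_
    · apply Continuous.aestronglyMeasurable
      apply Continuous.div (by fun_prop) (by fun_prop)
      intro y; positivity
    · filter_upwards with y
      rw [hf₂, Real.norm_eq_abs]
      simp only
      rw [abs_div, _root_.abs_of_pos (show (0:ℝ) < y ^ 2 + r ^ 2 by positivity),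
        Real.abs_exp, div_le_iff₀ (by positivity)]
      have : r ^ 2 ≤ y ^ 2 + r ^ 2 := by nlinarith [sq_nonneg y]
      calc Real.exp (-(Real.pi * t * y ^ 2))
          = (r^2)⁻¹ * Real.exp (-(Real.pi * t * y ^ 2)) * r ^ 2 := by field_simp
        _ ≤ (r^2)⁻¹ * Real.exp (-(Real.pi * t * y ^ 2)) * (y ^ 2 + r ^ 2) := by
            apply mul_le_mul_of_nonneg_left this (by positivity)
  -- odd part vanishes
  have hodd : ∫ y : ℝ, f₁ y = 0 := by
    have hoddf : ∀ y : ℝ, f₁ (-y) = - f₁ y := by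
      intro y; rw [hf₁]; simp only; rw [neg_pow]; ring_nf
    have h := MeasureTheory.integral_neg_eq_self f₁ (volume : Measure ℝ)
    simp only [hoddf, integral_neg] at h
    linarith
  -- rewrite LHS
  calc ∫ y : ℝ, Complex.exp (-(Real.pi * t * y ^ 2 : ℝ)) / ((y : ℂ) - Complex.I * r)
      = ∫ y : ℝ, ((f₁ y : ℂ) + Complex.I * r * (f₂ y : ℂ)) := by
        exact integral_congr_ae (Filter.Eventually.of_forall hdec)
    _ = (∫ y : ℝ, (f₁ y : ℂ)) + ∫ y : ℝ, Complex.I * r * (f₂ y : ℂ) := by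
        apply integral_add hif₁.ofReal ((hif₂.ofReal).const_mul _)
    _ = ((∫ y : ℝ, f₁ y : ℝ) : ℂ) + Complex.I * r * ((∫ y : ℝ, f₂ y : ℝ) : ℂ) := by
        have e1 : ∫ y : ℝ, (f₁ y : ℂ) = ((∫ y : ℝ, f₁ y : ℝ) : ℂ) := integral_ofReal
        have e2 : ∫ y : ℝ, (f₂ y : ℂ) = ((∫ y : ℝ, f₂ y : ℝ) : ℂ) := integral_ofReal
        rw [integral_const_mul, e1, e2]
    _ = Complex.I * r * ((∫ y : ℝ, f₂ y : ℝ) : ℂ) := by rw [hodd]; simp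
    _ = (Real.pi : ℂ) * Complex.I * r *
        ∫ u in Set.Ioi (0 : ℝ),
          Complex.exp (-(Real.pi * r ^ 2 * u : ℝ)) / (Real.sqrt (u + t) : ℂ) := by
        have hc : (fun u : ℝ => Complex.exp (-(Real.pi * r ^ 2 * u : ℝ)) / (Real.sqrt (u + t) : ℂ))
            = fun u : ℝ => ((Real.exp (-(Real.pi * r ^ 2 * u)) / Real.sqrt (u + t) : ℝ) : ℂ) := by
          funext u
          rw [← Complex.ofReal_neg, ← Complex.ofReal_exp, Complex.ofReal_div]
        have e3 : ∫ u in Set.Ioi (0:ℝ), ((Real.exp (-(Real.pi * r ^ 2 * u)) / Real.sqrt (u + t) : ℝ) : ℂ)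
            = ((∫ u in Set.Ioi (0:ℝ), Real.exp (-(Real.pi * r ^ 2 * u)) / Real.sqrt (u + t) : ℝ) : ℂ) :=
          integral_ofReal
        rw [hc, e3, gve_key t r ht hr]
        push_cast
        ring
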